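/- arXiv:2009.08332 — 3 statements merged into one kernel-verified Lean document; each statement's English description precedes it below -/
import Mathlib

section
/- Let U*(x) = K̄x + b̄ be the affine candidate defined by a full-row-rank active set A as in Lemma 1, and let λ*(x) = −(G^A H⁻¹(G^A)')⁻¹(S^A x + w^A). Then for any x ∈ ℝⁿ, the pair (U*(x), λ*(x)) satisfies the KKT conditions of the inequality-constrained QP min_U (1/2)U'HU + x'FU s.t. GU ≤ w + Ex if and only if G^I U*(x) ≤ w^I + E^I x and λ*(x) ≥ 0, where I = {1,...,q} \ A; these two conditions are exactly the inequalities T* x ≤ d* defining the polytope P* of Lemma 1. -/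
open Matrix

/-- the pair (U*(x), λ*(x)) satisfies the KKT conditions of the
inequality-constrained QP iff the inactive constraints and dual feasibility hold,
and these conditions are exactly the inequalities T*x ≤ d* of Lemma 1. -/
theorem stmt5 {N n q : ℕ}
    (H : Matrix (Fin N) (Fin N) ℝ) (F : Matrix (Fin n) (Fin N) ℝ)
    (G : Matrix (Fin q) (Fin N) ℝ) (w : Fin q → ℝ) (E : Matrix (Fin q) (Fin n) ℝ)
    (hH : H.PosDef) (A : Finset (Fin q))
    (hrank : LinearIndependent ℝ (fun i : A => G (i : Fin q)))
    (GA : Matrix A (Fin N) ℝ) (hGA : GA = G.submatrix (fun i : A => (i : Fin q)) id)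
    (EA : Matrix A (Fin n) ℝ) (hEA : EA = E.submatrix (fun i : A => (i : Fin q)) id)
    (wA : A → ℝ) (hwA : wA = fun i : A => w (i : Fin q))
    (GI : Matrix (Aᶜ : Finset (Fin q)) (Fin N) ℝ)
    (hGI : GI = G.submatrix (fun i : (Aᶜ : Finset (Fin q)) => (i : Fin q)) id)
    (EI : Matrix (Aᶜ : Finset (Fin q)) (Fin n) ℝ)
    (hEI : EI = E.submatrix (fun i : (Aᶜ : Finset (Fin q)) => (i : Fin q)) id)
    (wI : (Aᶜ : Finset (Fin q)) → ℝ) (hwI : wI = fun i : (Aᶜ : Finset (Fin q)) => w (i : Fin q))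
    (S : Matrix (Fin q) (Fin n) ℝ) (hS : S = E + G * H⁻¹ * Fᵀ)
    (SA : Matrix A (Fin n) ℝ) (hSA : SA = S.submatrix (fun i : A => (i : Fin q)) id)
    (SI : Matrix (Aᶜ : Finset (Fin q)) (Fin n) ℝ)
    (hSI : SI = S.submatrix (fun i : (Aᶜ : Finset (Fin q)) => (i : Fin q)) id)
    (M : Matrix A A ℝ) (hM : M = GA * H⁻¹ * GAᵀ)
    (Kb : Matrix (Fin N) (Fin n) ℝ)
    (hKb : Kb = H⁻¹ * GAᵀ * M⁻¹ * SA - H⁻¹ * Fᵀ)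
    (bb : Fin N → ℝ) (hbb : bb = (H⁻¹ * GAᵀ * M⁻¹) *ᵥ wA)
    (lam : (Fin n → ℝ) → (A → ℝ))
    (hlam : ∀ x, lam x = -(M⁻¹ *ᵥ (SA *ᵥ x + wA)))
    (Tst : Matrix ((Aᶜ : Finset (Fin q)) ⊕ A) (Fin n) ℝ)
    (hTst : Tst = Matrix.fromRows (GI * H⁻¹ * GAᵀ * M⁻¹ * SA - SI) (M⁻¹ * SA))
    (dst : ((Aᶜ : Finset (Fin q)) ⊕ A) → ℝ)
    (hdst : dst = Sum.elim (-(((GI * H⁻¹ * GAᵀ * M⁻¹) *ᵥ wA) - wI)) (-(M⁻¹ *ᵥ wA))) :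
    ∀ x : Fin n → ℝ,
      -- the full multiplier: λ*(x) on A, zero on the inactive set I
      ∀ lamq : Fin q → ℝ,
        (lamq = fun i => if h : i ∈ A then lam x ⟨i, h⟩ else 0) →
        (((H *ᵥ (Kb *ᵥ x + bb) + Fᵀ *ᵥ x + Gᵀ *ᵥ lamq = 0) ∧
          (∀ i, (G *ᵥ (Kb *ᵥ x + bb)) i ≤ w i + (E *ᵥ x) i) ∧
          (∀ i, 0 ≤ lamq i) ∧
          (∀ i, lamq i * ((G *ᵥ (Kb *ᵥ x + bb)) i - w i - (E *ᵥ x) i) = 0)) ↔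
         ((∀ i, (GI *ᵥ (Kb *ᵥ x + bb)) i ≤ wI i + (EI *ᵥ x) i) ∧
          (∀ i, 0 ≤ lam x i))) ∧
        (((∀ i, (GI *ᵥ (Kb *ᵥ x + bb)) i ≤ wI i + (EI *ᵥ x) i) ∧
          (∀ i, 0 ≤ lam x i)) ↔
         (∀ j, (Tst *ᵥ x) j ≤ dst j)) := by
  -- invertibility of H and M
  have hHdet : IsUnit H.det := isUnit_iff_ne_zero.mpr hH.det_pos.ne'
  have hMpd : M.PosDef := by
    have hker : ∀ v : A → ℝ, GAᵀ *ᵥ v = 0 → v = 0 := by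
      intro v hv
      have hsum : ∑ i : A, v i • (fun j => G (i : Fin q) j) = 0 := by
        funext j
        have := congrFun hv j
        simpa [Matrix.mulVec, dotProduct, hGA, mul_comm, Finset.sum_apply] using this
      have := Fintype.linearIndependent_iff.mp hrank v hsum
      funext i; exact this i
    refine Matrix.PosDef.of_dotProduct_mulVec_pos ?_ ?_
    · rw [hM]
      have := (hH.inv.posSemidef.mul_mul_conjTranspose_same GA).1
      simpa [Matrix.conjTranspose_eq_transpose_of_trivial] using this
    · intro v hv
      have hne : GAᵀ *ᵥ v ≠ 0 := fun h => hv (hker v h)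
      have h2 := hH.inv.dotProduct_mulVec_pos hne
      have : star v ⬝ᵥ (M *ᵥ v) = star (GAᵀ *ᵥ v) ⬝ᵥ (H⁻¹ *ᵥ (GAᵀ *ᵥ v)) := by
        simp [hM, ← Matrix.mulVec_mulVec, Matrix.dotProduct_mulVec, Matrix.mulVec_transpose]
      rw [this]; exact h2
  have hMdet : IsUnit M.det := isUnit_iff_ne_zero.mpr hMpd.det_pos.ne'
  have hHc : ∀ v : Fin N → ℝ, H *ᵥ (H⁻¹ *ᵥ v) = v := by
    intro v; rw [Matrix.mulVec_mulVec, Matrix.mul_nonsing_inv _ hHdet, Matrix.one_mulVec]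
  have hMc : ∀ v : A → ℝ, GA *ᵥ (H⁻¹ *ᵥ (GAᵀ *ᵥ (M⁻¹ *ᵥ v))) = v := by
    intro v
    rw [Matrix.mulVec_mulVec, Matrix.mulVec_mulVec, Matrix.mulVec_mulVec,
      ← hM, Matrix.mul_nonsing_inv _ hMdet, Matrix.one_mulVec]
  -- submatrix identities
  have hSAeq : SA = EA + GA * H⁻¹ * Fᵀ := by
    rw [hSA, hS]; ext i j
    simp [hEA, hGA, Matrix.mul_apply, Matrix.add_apply]
  have hSIeq : SI = EI + GI * H⁻¹ * Fᵀ := by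
    rw [hSI, hS]; ext i j
    simp [hEI, hGI, Matrix.mul_apply, Matrix.add_apply]
  intro x lamq hlamq
  set U : Fin N → ℝ := Kb *ᵥ x + bb with hU
  have hUeq : U = H⁻¹ *ᵥ (GAᵀ *ᵥ (M⁻¹ *ᵥ (SA *ᵥ x + wA))) - H⁻¹ *ᵥ (Fᵀ *ᵥ x) := by
    rw [hU, hKb, hbb]
    simp only [Matrix.sub_mulVec, ← Matrix.mulVec_mulVec, Matrix.mulVec_add]
    abel
  -- coordinate lemmas
  have hwA' : ∀ (i : Fin q) (h : i ∈ A), wA ⟨i, h⟩ = w i := by simp [hwA]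
  have hwI' : ∀ (i : Fin q) (h : i ∈ Aᶜ), wI ⟨i, h⟩ = w i := by simp [hwI]
  have hGrowA : ∀ (i : Fin q) (h : i ∈ A), (G *ᵥ U) i = (GA *ᵥ U) ⟨i, h⟩ := by
    intro i h; simp [Matrix.mulVec, hGA]
  have hErowA : ∀ (i : Fin q) (h : i ∈ A), (E *ᵥ x) i = (EA *ᵥ x) ⟨i, h⟩ := by
    intro i h; simp [Matrix.mulVec, hEA]
  have hGrowI : ∀ (i : Fin q) (h : i ∈ Aᶜ), (G *ᵥ U) i = (GI *ᵥ U) ⟨i, h⟩ := by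
    intro i h; simp [Matrix.mulVec, hGI]
  have hErowI : ∀ (i : Fin q) (h : i ∈ Aᶜ), (E *ᵥ x) i = (EI *ᵥ x) ⟨i, h⟩ := by
    intro i h; simp [Matrix.mulVec, hEI]
  -- active constraints hold with equality
  have hactive : GA *ᵥ U = EA *ᵥ x + wA := by
    rw [hUeq, Matrix.mulVec_sub, hMc, Matrix.mulVec_mulVec, hSAeq]
    simp only [Matrix.add_mulVec, ← Matrix.mulVec_mulVec]
    abel
  have hactive' : ∀ (i : Fin q) (h : i ∈ A), (G *ᵥ U) i = w i + (E *ᵥ x) i := by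
    intro i h
    rw [hGrowA i h, hactive, Pi.add_apply, hwA' i h, ← hErowA i h]
    ring
  -- stationarity always holds
  have hGtl : Gᵀ *ᵥ lamq = GAᵀ *ᵥ (lam x) := by
    funext k
    have h1 : ∀ j ∈ Finset.univ, j ∉ A → G j k * lamq j = 0 := by
      intro j _ hj; rw [hlamq]; simp [dif_neg hj]
    calc (Gᵀ *ᵥ lamq) k = ∑ j : Fin q, G j k * lamq j := by
          simp [Matrix.mulVec, dotProduct, Matrix.transpose_apply]
    _ = ∑ j ∈ A, G j k * lamq j :=
          (Finset.sum_subset (Finset.subset_univ A) h1).symm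
    _ = ∑ i : A, G (i : Fin q) k * lamq (i : Fin q) :=
          (Finset.sum_coe_sort A (fun j => G j k * lamq j)).symm
    _ = ∑ i : A, GA i k * lam x i := by
          refine Finset.sum_congr rfl fun i _ => ?_
          rw [hlamq, hGA]
          simp [dif_pos i.2]
    _ = (GAᵀ *ᵥ lam x) k := by
          simp [Matrix.mulVec, dotProduct, Matrix.transpose_apply]
  have hstat : H *ᵥ U + Fᵀ *ᵥ x + Gᵀ *ᵥ lamq = 0 := by
    rw [hGtl, hlam x, hUeq, Matrix.mulVec_sub, hHc, hHc, Matrix.mulVec_neg]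
    abel
  -- gap identities for the second iff
  have hgapI : ∀ i : (Aᶜ : Finset (Fin q)),
      wI i + (EI *ᵥ x) i - (GI *ᵥ U) i = dst (Sum.inl i) - (Tst *ᵥ x) (Sum.inl i) := by
    intro i
    have hvec : wI + EI *ᵥ x - GI *ᵥ U =
        (-(((GI * H⁻¹ * GAᵀ * M⁻¹) *ᵥ wA) - wI)) - (GI * H⁻¹ * GAᵀ * M⁻¹ * SA - SI) *ᵥ x := by
      rw [hUeq, hSIeq]
      simp only [Matrix.mulVec_sub, Matrix.sub_mulVec, Matrix.add_mulVec,
        ← Matrix.mulVec_mulVec, Matrix.mulVec_add]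
      abel
    have h2 := congrFun hvec i
    simp only [Pi.add_apply, Pi.sub_apply] at h2
    rw [h2, hTst, hdst]
    simp [Matrix.fromRows_mulVec]
  have hgapA : ∀ i : A, lam x i = dst (Sum.inr i) - (Tst *ᵥ x) (Sum.inr i) := by
    intro i
    rw [hlam, hTst, hdst]
    simp only [Matrix.fromRows_mulVec, Sum.elim_inr, Matrix.mulVec_add,
      ← Matrix.mulVec_mulVec, Pi.neg_apply, Pi.add_apply, Pi.sub_apply]
    ring
  constructor
  · constructor
    · rintro ⟨-, hfeas, hdual, -⟩
      constructor
      · intro i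
        have h0 := hfeas (i : Fin q)
        rw [hGrowI (i : Fin q) i.2, hErowI (i : Fin q) i.2] at h0
        simpa [Subtype.coe_eta, hwI' (i : Fin q) i.2] using h0
      · intro i
        have h0 := hdual (i : Fin q)
        rw [hlamq] at h0
        simpa [dif_pos i.2] using h0
    · rintro ⟨hfeas, hdual⟩
      refine ⟨hstat, ?_, ?_, ?_⟩
      · intro i
        by_cases hi : i ∈ A
        · exact le_of_eq (hactive' i hi)
        · have hi' : i ∈ Aᶜ := Finset.mem_compl.mpr hi
          have h0 := hfeas ⟨i, hi'⟩
          rw [← hGrowI i hi', ← hErowI i hi', hwI' i hi'] at h0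
          exact h0
      · intro i
        simp only [hlamq]
        by_cases hi : i ∈ A
        · rw [dif_pos hi]; exact hdual ⟨i, hi⟩
        · rw [dif_neg hi]
      · intro i
        simp only [hlamq]
        by_cases hi : i ∈ A
        · rw [dif_pos hi, hactive' i hi]; ring
        · rw [dif_neg hi, zero_mul]
  · constructor
    · rintro ⟨hfeas, hdual⟩ j
      cases j with
      | inl i => have h0 := hfeas i; have hg := hgapI i; linarith
      | inr i => have h0 := hdual i; have hg := hgapA i; linarith
    · intro hT
      constructor
      · intro i; have h0 := hT (Sum.inl i); have hg := hgapI i; linarith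
      · intro i; have h0 := hT (Sum.inr i); have hg := hgapA i; linarith
end

section
/- Lemma 1 of the paper: Let x₀ be a feasible parameter of the QP min_U (1/2)U'HU + x'FU s.t. GU ≤ w + Ex with H ≻ 0, let A = A(x₀) be its optimal active set, and assume G^A has full row rank and the associated multiplier λ*(x₀) = −(G^A H⁻¹(G^A)')⁻¹(S^A x₀ + w^A) has strictly nonnegative components. Define K̄, b̄, T*, d* as in the paper. Then for every x in the polytope P* = {x : T*x ≤ d*}, the point U*(x) = K̄x + b̄ is the unique optimal solution of the QP with parameter x. -/
open Matrix

lemma submul' {l m p k : Type*} [Fintype m] (A : Matrix l m ℝ) (B : Matrix m k ℝ) (f : p → l) :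
    (A * B).submatrix f id = A.submatrix f id * B := by
  ext i j; simp [Matrix.mul_apply]

lemma qexpand {N n : ℕ} (H : Matrix (Fin N) (Fin N) ℝ) (F : Matrix (Fin n) (Fin N) ℝ)
    (hsym : Hᵀ = H) (x : Fin n → ℝ) (U V : Fin N → ℝ) :
    (1/2) * (V ⬝ᵥ (H *ᵥ V)) + x ⬝ᵥ (F *ᵥ V)
      = ((1/2) * (U ⬝ᵥ (H *ᵥ U)) + x ⬝ᵥ (F *ᵥ U))
        + (H *ᵥ U + Fᵀ *ᵥ x) ⬝ᵥ (V - U)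
        + (1/2) * ((V - U) ⬝ᵥ (H *ᵥ (V - U))) := by
  have hUV : U ⬝ᵥ (H *ᵥ V) = V ⬝ᵥ (H *ᵥ U) := by
    rw [Matrix.dotProduct_mulVec, ← Matrix.mulVec_transpose, hsym, dotProduct_comm]
  have hFx : ∀ z : Fin N → ℝ, (Fᵀ *ᵥ x) ⬝ᵥ z = x ⬝ᵥ (F *ᵥ z) := by
    intro z
    rw [Matrix.mulVec_transpose, ← Matrix.dotProduct_mulVec]
  have hHU : ∀ z : Fin N → ℝ, (H *ᵥ U) ⬝ᵥ z = U ⬝ᵥ (H *ᵥ z) := by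
    intro z
    rw [dotProduct_comm, Matrix.dotProduct_mulVec, ← Matrix.mulVec_transpose, hsym,
      dotProduct_comm]
  simp only [Matrix.mulVec_sub, dotProduct_sub, sub_dotProduct,
    add_dotProduct, hFx, hHU, hUV]
  ring

section main
variable {N n q : ℕ}

theorem stmt7' 
    (H : Matrix (Fin N) (Fin N) ℝ) (F : Matrix (Fin n) (Fin N) ℝ)
    (G : Matrix (Fin q) (Fin N) ℝ) (w : Fin q → ℝ) (E : Matrix (Fin q) (Fin n) ℝ)
    (hH : H.PosDef)
    (A : Finset (Fin q))
    (hrank : LinearIndependent ℝ (fun i : A => G (i : Fin q)))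
    (GA : Matrix A (Fin N) ℝ) (hGA : GA = G.submatrix (fun i : A => (i : Fin q)) id)
    (wA : A → ℝ) (hwA : wA = fun i : A => w (i : Fin q))
    (GI : Matrix (Aᶜ : Finset (Fin q)) (Fin N) ℝ)
    (hGI : GI = G.submatrix (fun i : (Aᶜ : Finset (Fin q)) => (i : Fin q)) id)
    (wI : (Aᶜ : Finset (Fin q)) → ℝ) (hwI : wI = fun i : (Aᶜ : Finset (Fin q)) => w (i : Fin q))
    (S : Matrix (Fin q) (Fin n) ℝ) (hS : S = E + G * H⁻¹ * Fᵀ)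
    (SA : Matrix A (Fin n) ℝ) (hSA : SA = S.submatrix (fun i : A => (i : Fin q)) id)
    (SI : Matrix (Aᶜ : Finset (Fin q)) (Fin n) ℝ)
    (hSI : SI = S.submatrix (fun i : (Aᶜ : Finset (Fin q)) => (i : Fin q)) id)
    (M : Matrix A A ℝ) (hM : M = GA * H⁻¹ * GAᵀ)
    (Kb : Matrix (Fin N) (Fin n) ℝ)
    (hKb : Kb = H⁻¹ * GAᵀ * M⁻¹ * SA - H⁻¹ * Fᵀ)
    (bb : Fin N → ℝ) (hbb : bb = (H⁻¹ * GAᵀ * M⁻¹) *ᵥ wA)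
    (Tst : Matrix ((Aᶜ : Finset (Fin q)) ⊕ A) (Fin n) ℝ)
    (hTst : Tst = Matrix.fromRows (GI * H⁻¹ * GAᵀ * M⁻¹ * SA - SI) (M⁻¹ * SA))
    (dst : ((Aᶜ : Finset (Fin q)) ⊕ A) → ℝ)
    (hdst : dst = Sum.elim (-(((GI * H⁻¹ * GAᵀ * M⁻¹) *ᵥ wA) - wI)) (-(M⁻¹ *ᵥ wA))) :
    ∀ x : Fin n → ℝ, (∀ j, (Tst *ᵥ x) j ≤ dst j) →
      (∀ i, (G *ᵥ (Kb *ᵥ x + bb)) i ≤ w i + (E *ᵥ x) i) ∧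
      (∀ V : Fin N → ℝ, (∀ i, (G *ᵥ V) i ≤ w i + (E *ᵥ x) i) →
        (1/2) * ((Kb *ᵥ x + bb) ⬝ᵥ (H *ᵥ (Kb *ᵥ x + bb))) + x ⬝ᵥ (F *ᵥ (Kb *ᵥ x + bb)) ≤
        (1/2) * (V ⬝ᵥ (H *ᵥ V)) + x ⬝ᵥ (F *ᵥ V)) ∧
      (∀ V : Fin N → ℝ, (∀ i, (G *ᵥ V) i ≤ w i + (E *ᵥ x) i) →
        (∀ W : Fin N → ℝ, (∀ i, (G *ᵥ W) i ≤ w i + (E *ᵥ x) i) →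
          (1/2) * (V ⬝ᵥ (H *ᵥ V)) + x ⬝ᵥ (F *ᵥ V) ≤
          (1/2) * (W ⬝ᵥ (H *ᵥ W)) + x ⬝ᵥ (F *ᵥ W)) →
        V = Kb *ᵥ x + bb) := by
  classical
  have hHsym : Hᵀ = H := hH.isHermitian
  have hHHi : H * H⁻¹ = 1 := Matrix.mul_nonsing_inv H hH.det_pos.ne'.isUnit
  have hGAinj : ∀ c : A → ℝ, GAᵀ *ᵥ c = 0 → c = 0 := by
    intro c hc
    have h0 : ∑ i : A, c i • (fun j => G (i : Fin q) j) = 0 := by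
      funext j
      have := congrFun hc j
      simpa [Matrix.mulVec, dotProduct, hGA, Finset.sum_apply, mul_comm] using this
    have := Fintype.linearIndependent_iff.mp hrank c h0
    funext i; exact this i
  have hMpd : M.PosDef := by
    have hHi : (H⁻¹).PosDef := hH.inv
    refine Matrix.PosDef.of_dotProduct_mulVec_pos ?_ ?_
    · rw [hM]
      have h1 : (GA * H⁻¹ * GAᵀ)ᵀ = GA * (H⁻¹)ᵀ * GAᵀ := by
        simp [Matrix.transpose_mul, Matrix.mul_assoc]
      show (GA * H⁻¹ * GAᵀ)ᴴ = _
      have h2 : (H⁻¹)ᵀ = H⁻¹ := hHi.isHermitian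
      simpa [Matrix.conjTranspose_eq_transpose_of_trivial, Matrix.transpose_transpose] using h1.trans (by rw [h2])
    · intro c hc
      have hy : GAᵀ *ᵥ c ≠ 0 := fun h => hc (hGAinj c h)
      have hpos := hHi.dotProduct_mulVec_pos hy
      have hpos' : (0:ℝ) < (GAᵀ *ᵥ c) ⬝ᵥ (H⁻¹ *ᵥ (GAᵀ *ᵥ c)) := by simpa using hpos
      calc (0:ℝ) < (GAᵀ *ᵥ c) ⬝ᵥ (H⁻¹ *ᵥ (GAᵀ *ᵥ c)) := hpos'
        _ = star c ⬝ᵥ (M *ᵥ c) := by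
          rw [hM, show star c = c from rfl, ← Matrix.mulVec_mulVec, ← Matrix.mulVec_mulVec,
            Matrix.dotProduct_mulVec c GA, ← Matrix.mulVec_transpose]
  have hMMi : M * M⁻¹ = 1 := Matrix.mul_nonsing_inv M hMpd.det_pos.ne'.isUnit
  -- structural identities
  have hSAeq : SA = E.submatrix (fun i : A => (i : Fin q)) id + GA * (H⁻¹ * Fᵀ) := by
    rw [hSA, hS, Matrix.mul_assoc]
    simp only [Matrix.submatrix_add, Pi.add_apply]
    rw [submul', hGA]
  have hSIeq : SI = E.submatrix (fun i : (Aᶜ : Finset (Fin q)) => (i : Fin q)) id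
      + GI * (H⁻¹ * Fᵀ) := by
    rw [hSI, hS, Matrix.mul_assoc]
    simp only [Matrix.submatrix_add, Pi.add_apply]
    rw [submul', hGI]
  have hHK : H * Kb = GAᵀ * M⁻¹ * SA - Fᵀ := by
    rw [hKb, Matrix.mul_sub]
    simp only [← Matrix.mul_assoc]
    rw [hHHi, Matrix.one_mul, Matrix.one_mul]
  have hHbb : H *ᵥ bb = (GAᵀ * M⁻¹) *ᵥ wA := by
    rw [hbb, Matrix.mulVec_mulVec]
    simp only [← Matrix.mul_assoc]
    rw [hHHi, Matrix.one_mul]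
  have hGAK : GA * Kb = E.submatrix (fun i : A => (i : Fin q)) id := by
    rw [hKb, Matrix.mul_sub]
    simp only [← Matrix.mul_assoc]
    rw [← hM, hMMi, Matrix.one_mul, hSAeq]
    simp [Matrix.mul_assoc]
  have hGAbb : GA *ᵥ bb = wA := by
    rw [hbb, Matrix.mulVec_mulVec]
    simp only [← Matrix.mul_assoc]
    rw [← hM, hMMi, Matrix.one_mulVec]
  have hGIK : GI * Kb = GI * H⁻¹ * GAᵀ * M⁻¹ * SA - GI * (H⁻¹ * Fᵀ) := by
    rw [hKb, Matrix.mul_sub]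
    simp only [Matrix.mul_assoc]
  have hGIbb : GI *ᵥ bb = (GI * H⁻¹ * GAᵀ * M⁻¹) *ᵥ wA := by
    rw [hbb, Matrix.mulVec_mulVec]
    simp only [Matrix.mul_assoc]
  intro x hx
  set U : Fin N → ℝ := Kb *ᵥ x + bb with hU
  -- active constraints hold with equality at U
  have hfeasA : ∀ i : A, (G *ᵥ U) (i : Fin q) = w (i : Fin q) + (E *ᵥ x) (i : Fin q) := by
    intro i
    have h1 : (GA *ᵥ U) i = (E.submatrix (fun i : A => (i : Fin q)) id *ᵥ x) i + wA i := by
      rw [hU, Matrix.mulVec_add, Matrix.mulVec_mulVec, hGAK, hGAbb]; rfl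
    have h2 : (GA *ᵥ U) i = (G *ᵥ U) (i : Fin q) := by rw [hGA]; rfl
    have h3 : (E.submatrix (fun i : A => (i : Fin q)) id *ᵥ x) i = (E *ᵥ x) (i : Fin q) := rfl
    rw [← h2, h1, h3, hwA]
    ring
  -- inactive constraints hold at U
  have hfeasI : ∀ i : (Aᶜ : Finset (Fin q)),
      (G *ᵥ U) (i : Fin q) ≤ w (i : Fin q) + (E *ᵥ x) (i : Fin q) := by
    intro i
    have hxi := hx (Sum.inl i)
    rw [hTst, hdst, Matrix.fromRows_mulVec] at hxi
    simp only [Sum.elim_inl, Matrix.sub_mulVec, Pi.sub_apply, Pi.neg_apply] at hxi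
    have h2 : (GI *ᵥ U) i = (G *ᵥ U) (i : Fin q) := by rw [hGI]; rfl
    have h1 : (GI *ᵥ U) i = ((GI * H⁻¹ * GAᵀ * M⁻¹ * SA) *ᵥ x) i
        - ((GI * (H⁻¹ * Fᵀ)) *ᵥ x) i + ((GI * H⁻¹ * GAᵀ * M⁻¹) *ᵥ wA) i := by
      rw [hU, Matrix.mulVec_add, Matrix.mulVec_mulVec, hGIK, hGIbb, Matrix.sub_mulVec]
      simp
    have h4 : (SI *ᵥ x) i = (E *ᵥ x) (i : Fin q) + ((GI * (H⁻¹ * Fᵀ)) *ᵥ x) i := by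
      rw [hSIeq, Matrix.add_mulVec]
      rfl
    have h5 : wI i = w (i : Fin q) := by rw [hwI]
    rw [← h2, h1]
    rw [h4, h5] at hxi
    linarith
  -- multipliers are nonpositive (μ = M⁻¹ (SA x + wA) ≤ 0)
  have hlam : ∀ i : A, (M⁻¹ *ᵥ (SA *ᵥ x + wA)) i ≤ 0 := by
    intro i
    have hxi := hx (Sum.inr i)
    rw [hTst, hdst, Matrix.fromRows_mulVec] at hxi
    simp only [Sum.elim_inr, Pi.neg_apply] at hxi
    have : (M⁻¹ *ᵥ (SA *ᵥ x + wA)) i = ((M⁻¹ * SA) *ᵥ x) i + (M⁻¹ *ᵥ wA) i := by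
      rw [Matrix.mulVec_add, Matrix.mulVec_mulVec]; rfl
    rw [this]; linarith
  -- stationarity
  have hstat : H *ᵥ U + Fᵀ *ᵥ x = GAᵀ *ᵥ (M⁻¹ *ᵥ (SA *ᵥ x + wA)) := by
    rw [hU]
    simp only [Matrix.mulVec_add, Matrix.mulVec_mulVec, hHK, Matrix.sub_mulVec, hHbb,
      ← Matrix.mul_assoc]
    abel
  -- feasibility of U
  have hfeas : ∀ i, (G *ᵥ U) i ≤ w i + (E *ᵥ x) i := by
    intro i
    by_cases h : i ∈ A
    · exact le_of_eq (hfeasA ⟨i, h⟩)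
    · exact hfeasI ⟨i, Finset.mem_compl.mpr h⟩
  -- key inequality
  have hkey : ∀ V : Fin N → ℝ, (∀ i, (G *ᵥ V) i ≤ w i + (E *ᵥ x) i) →
      ((1/2) * (U ⬝ᵥ (H *ᵥ U)) + x ⬝ᵥ (F *ᵥ U))
        + (1/2) * ((V - U) ⬝ᵥ (H *ᵥ (V - U)))
      ≤ (1/2) * (V ⬝ᵥ (H *ᵥ V)) + x ⬝ᵥ (F *ᵥ V) := by
    intro V hV
    rw [qexpand H F hHsym x U V]
    have hnn : 0 ≤ (H *ᵥ U + Fᵀ *ᵥ x) ⬝ᵥ (V - U) := by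
      rw [hstat, show GAᵀ *ᵥ (M⁻¹ *ᵥ (SA *ᵥ x + wA)) = (M⁻¹ *ᵥ (SA *ᵥ x + wA)) ᵥ* GA from
        Matrix.mulVec_transpose GA _, ← Matrix.dotProduct_mulVec]
      have : (0:ℝ) ≤ ∑ i : A, (M⁻¹ *ᵥ (SA *ᵥ x + wA)) i * (GA *ᵥ (V - U)) i := by
        apply Finset.sum_nonneg
        intro i _
        have h1 : (M⁻¹ *ᵥ (SA *ᵥ x + wA)) i ≤ 0 := hlam i
        have h2 : (GA *ᵥ (V - U)) i ≤ 0 := by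
          have hV' : (GA *ᵥ V) i ≤ w ↑i + (E *ᵥ x) ↑i := by
            have : (GA *ᵥ V) i = (G *ᵥ V) (i : Fin q) := by rw [hGA]; rfl
            rw [this]; exact hV ↑i
          have hU' : (GA *ᵥ U) i = w ↑i + (E *ᵥ x) ↑i := by
            have : (GA *ᵥ U) i = (G *ᵥ U) (i : Fin q) := by rw [hGA]; rfl
            rw [this]; exact hfeasA i
          rw [Matrix.mulVec_sub]
          simp only [Pi.sub_apply]
          linarith
        have := mul_nonneg (neg_nonneg.2 h1) (neg_nonneg.2 h2)
        simpa using this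
      simpa [dotProduct] using this
    linarith
  refine ⟨hfeas, ?_, ?_⟩
  · intro V hV
    have hk := hkey V hV
    have hq : 0 ≤ (V - U) ⬝ᵥ (H *ᵥ (V - U)) := by
      have := hH.posSemidef.dotProduct_mulVec_nonneg (V - U)
      simpa using this
    linarith
  · intro V hV hVopt
    by_contra hne
    have hd : V - U ≠ 0 := sub_ne_zero.mpr hne
    have hq : 0 < (V - U) ⬝ᵥ (H *ᵥ (V - U)) := by
      have := hH.dotProduct_mulVec_pos hd
      simpa using this
    have hk := hkey V hV
    have hVU := hVopt U hfeas
    linarith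

end main

/-- Lemma 1 of the paper. On the polytope P* = {x : T*x ≤ d*},
U*(x) = K̄x + b̄ is the unique optimal solution of the parametric QP. -/
theorem stmt7 {N n q : ℕ}
    (H : Matrix (Fin N) (Fin N) ℝ) (F : Matrix (Fin n) (Fin N) ℝ)
    (G : Matrix (Fin q) (Fin N) ℝ) (w : Fin q → ℝ) (E : Matrix (Fin q) (Fin n) ℝ)
    (hH : H.PosDef)
    (x0 : Fin n → ℝ) (U0 : Fin N → ℝ)
    (hU0feas : ∀ i, (G *ᵥ U0) i ≤ w i + (E *ᵥ x0) i)
    (hU0opt : ∀ V : Fin N → ℝ, (∀ i, (G *ᵥ V) i ≤ w i + (E *ᵥ x0) i) →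
        (1/2) * (U0 ⬝ᵥ (H *ᵥ U0)) + x0 ⬝ᵥ (F *ᵥ U0) ≤
        (1/2) * (V ⬝ᵥ (H *ᵥ V)) + x0 ⬝ᵥ (F *ᵥ V))
    (A : Finset (Fin q))
    (hA : ∀ i, i ∈ A ↔ (G *ᵥ U0) i = w i + (E *ᵥ x0) i)
    (hrank : LinearIndependent ℝ (fun i : A => G (i : Fin q)))
    (GA : Matrix A (Fin N) ℝ) (hGA : GA = G.submatrix (fun i : A => (i : Fin q)) id)
    (wA : A → ℝ) (hwA : wA = fun i : A => w (i : Fin q))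
    (GI : Matrix (Aᶜ : Finset (Fin q)) (Fin N) ℝ)
    (hGI : GI = G.submatrix (fun i : (Aᶜ : Finset (Fin q)) => (i : Fin q)) id)
    (wI : (Aᶜ : Finset (Fin q)) → ℝ) (hwI : wI = fun i : (Aᶜ : Finset (Fin q)) => w (i : Fin q))
    (S : Matrix (Fin q) (Fin n) ℝ) (hS : S = E + G * H⁻¹ * Fᵀ)
    (SA : Matrix A (Fin n) ℝ) (hSA : SA = S.submatrix (fun i : A => (i : Fin q)) id)
    (SI : Matrix (Aᶜ : Finset (Fin q)) (Fin n) ℝ)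
    (hSI : SI = S.submatrix (fun i : (Aᶜ : Finset (Fin q)) => (i : Fin q)) id)
    (M : Matrix A A ℝ) (hM : M = GA * H⁻¹ * GAᵀ)
    -- nonnegativity of the multiplier at x0
    (hlam0 : ∀ i : A, 0 ≤ (-(M⁻¹ *ᵥ (SA *ᵥ x0 + wA))) i)
    (Kb : Matrix (Fin N) (Fin n) ℝ)
    (hKb : Kb = H⁻¹ * GAᵀ * M⁻¹ * SA - H⁻¹ * Fᵀ)
    (bb : Fin N → ℝ) (hbb : bb = (H⁻¹ * GAᵀ * M⁻¹) *ᵥ wA)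
    (Tst : Matrix ((Aᶜ : Finset (Fin q)) ⊕ A) (Fin n) ℝ)
    (hTst : Tst = Matrix.fromRows (GI * H⁻¹ * GAᵀ * M⁻¹ * SA - SI) (M⁻¹ * SA))
    (dst : ((Aᶜ : Finset (Fin q)) ⊕ A) → ℝ)
    (hdst : dst = Sum.elim (-(((GI * H⁻¹ * GAᵀ * M⁻¹) *ᵥ wA) - wI)) (-(M⁻¹ *ᵥ wA))) :
    ∀ x : Fin n → ℝ, (∀ j, (Tst *ᵥ x) j ≤ dst j) →
      (∀ i, (G *ᵥ (Kb *ᵥ x + bb)) i ≤ w i + (E *ᵥ x) i) ∧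
      (∀ V : Fin N → ℝ, (∀ i, (G *ᵥ V) i ≤ w i + (E *ᵥ x) i) →
        (1/2) * ((Kb *ᵥ x + bb) ⬝ᵥ (H *ᵥ (Kb *ᵥ x + bb))) + x ⬝ᵥ (F *ᵥ (Kb *ᵥ x + bb)) ≤
        (1/2) * (V ⬝ᵥ (H *ᵥ V)) + x ⬝ᵥ (F *ᵥ V)) ∧
      (∀ V : Fin N → ℝ, (∀ i, (G *ᵥ V) i ≤ w i + (E *ᵥ x) i) →
        (∀ W : Fin N → ℝ, (∀ i, (G *ᵥ W) i ≤ w i + (E *ᵥ x) i) →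
          (1/2) * (V ⬝ᵥ (H *ᵥ V)) + x ⬝ᵥ (F *ᵥ V) ≤
          (1/2) * (W ⬝ᵥ (H *ᵥ W)) + x ⬝ᵥ (F *ᵥ W)) →
        V = Kb *ᵥ x + bb) :=
  stmt7' H F G w E hH A hrank GA hGA wA hwA GI hGI wI hwI S hS SA hSA SI hSI M hM
    Kb hKb bb hbb Tst hTst dst hdst
end

section
/- Polytopes with disjoint interiors from distinct optimal active sets: if x lies in the interior of both P₁* and P₂* (regions from Lemma 1 for full-row-rank active sets A₁ ≠ A₂, each with strictly positive multipliers and strictly inactive non-active constraints at x), then A₁ = A₂. Equivalently, at a parameter x where all multipliers of active constraints are strictly positive and all inactive constraints hold strictly, the optimal active set is uniquely determined. -/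
open Matrix

/-- at a parameter x where two affine laws are optimal with exact
active sets A₁, A₂ (strict complementarity holding for each), the optimal active
set is uniquely determined: A₁ = A₂. -/
theorem stmt17 {N n q : ℕ}
    (H : Matrix (Fin N) (Fin N) ℝ) (F : Matrix (Fin n) (Fin N) ℝ)
    (G : Matrix (Fin q) (Fin N) ℝ) (w : Fin q → ℝ) (E : Matrix (Fin q) (Fin n) ℝ)
    (x : Fin n → ℝ) (hH : H.PosDef)
    (A1 A2 : Finset (Fin q))
    (K1 K2 : Matrix (Fin N) (Fin n) ℝ) (b1 b2 : Fin N → ℝ)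
    (lam1 lam2 : Fin q → ℝ)
    -- law 1 is optimal at x with active set exactly A1 and strict complementarity
    (h1feas : ∀ i, (G *ᵥ (K1 *ᵥ x + b1)) i ≤ w i + (E *ᵥ x) i)
    (h1opt : ∀ V : Fin N → ℝ, (∀ i, (G *ᵥ V) i ≤ w i + (E *ᵥ x) i) →
        (1/2) * ((K1 *ᵥ x + b1) ⬝ᵥ (H *ᵥ (K1 *ᵥ x + b1))) + x ⬝ᵥ (F *ᵥ (K1 *ᵥ x + b1)) ≤
        (1/2) * (V ⬝ᵥ (H *ᵥ V)) + x ⬝ᵥ (F *ᵥ V))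
    (h1act : ∀ i ∈ A1, (G *ᵥ (K1 *ᵥ x + b1)) i = w i + (E *ᵥ x) i)
    (h1inact : ∀ i ∉ A1, (G *ᵥ (K1 *ᵥ x + b1)) i < w i + (E *ᵥ x) i)
    (h1stat : H *ᵥ (K1 *ᵥ x + b1) + Fᵀ *ᵥ x + Gᵀ *ᵥ lam1 = 0)
    (h1pos : ∀ i ∈ A1, 0 < lam1 i) (h1zero : ∀ i ∉ A1, lam1 i = 0)
    -- law 2 is optimal at x with active set exactly A2 and strict complementarity
    (h2feas : ∀ i, (G *ᵥ (K2 *ᵥ x + b2)) i ≤ w i + (E *ᵥ x) i)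
    (h2opt : ∀ V : Fin N → ℝ, (∀ i, (G *ᵥ V) i ≤ w i + (E *ᵥ x) i) →
        (1/2) * ((K2 *ᵥ x + b2) ⬝ᵥ (H *ᵥ (K2 *ᵥ x + b2))) + x ⬝ᵥ (F *ᵥ (K2 *ᵥ x + b2)) ≤
        (1/2) * (V ⬝ᵥ (H *ᵥ V)) + x ⬝ᵥ (F *ᵥ V))
    (h2act : ∀ i ∈ A2, (G *ᵥ (K2 *ᵥ x + b2)) i = w i + (E *ᵥ x) i)
    (h2inact : ∀ i ∉ A2, (G *ᵥ (K2 *ᵥ x + b2)) i < w i + (E *ᵥ x) i)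
    (h2stat : H *ᵥ (K2 *ᵥ x + b2) + Fᵀ *ᵥ x + Gᵀ *ᵥ lam2 = 0)
    (h2pos : ∀ i ∈ A2, 0 < lam2 i) (h2zero : ∀ i ∉ A2, lam2 i = 0) :
    A1 = A2 := by
  set U1 := K1 *ᵥ x + b1 with hU1def
  set U2 := K2 *ᵥ x + b2 with hU2def
  have hUeq : U1 = U2 := by
    by_contra hne
    have hd : U1 - U2 ≠ 0 := sub_ne_zero.mpr hne
    have hpos : 0 < (U1 - U2) ⬝ᵥ (H *ᵥ (U1 - U2)) := by
      have := hH.dotProduct_mulVec_pos hd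
      simpa using this
    have hHsymm : Hᵀ = H := by
      have := hH.1
      simpa [Matrix.IsHermitian] using this
    have hsym : U1 ⬝ᵥ (H *ᵥ U2) = U2 ⬝ᵥ (H *ᵥ U1) := by
      rw [dotProduct_mulVec, ← mulVec_transpose, hHsymm, dotProduct_comm]
    set M := (1/2 : ℝ) • (U1 + U2) with hMdef
    have hMfeas : ∀ i, (G *ᵥ M) i ≤ w i + (E *ᵥ x) i := by
      intro i
      have h1 := h1feas i
      have h2 := h2feas i
      have hGM : (G *ᵥ M) i = (1/2) * ((G *ᵥ U1) i + (G *ᵥ U2) i) := by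
        simp [hMdef, mulVec_smul, mulVec_add, Pi.smul_apply, Pi.add_apply,
          smul_eq_mul]
        ring
      rw [hGM]; linarith
    set a := U1 ⬝ᵥ (H *ᵥ U1) with hadef
    set b := U1 ⬝ᵥ (H *ᵥ U2) with hbdef
    set c := U2 ⬝ᵥ (H *ᵥ U2) with hcdef
    set l1 := x ⬝ᵥ (F *ᵥ U1) with hl1def
    set l2 := x ⬝ᵥ (F *ᵥ U2) with hl2def
    have hquadM : M ⬝ᵥ (H *ᵥ M) = (1/4) * (a + 2*b + c) := by
      simp only [hMdef, mulVec_smul, mulVec_add, dotProduct_add, add_dotProduct,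
        dotProduct_smul, smul_dotProduct, smul_eq_mul]
      rw [← hsym]; ring
    have hlinM : x ⬝ᵥ (F *ᵥ M) = (1/2) * (l1 + l2) := by
      simp only [hMdef, mulVec_smul, mulVec_add, dotProduct_add, dotProduct_smul,
        smul_eq_mul]
      rfl
    have hexp : (U1 - U2) ⬝ᵥ (H *ᵥ (U1 - U2)) = a - 2*b + c := by
      simp only [mulVec_sub, dotProduct_sub, sub_dotProduct]
      rw [← hsym]; ring
    have hle1 := h1opt M hMfeas
    have hle2 := h1opt U2 h2feas
    have hle3 := h2opt U1 h1feas
    rw [hquadM, hlinM] at hle1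
    rw [hexp] at hpos
    linarith
  ext i
  constructor
  · intro hi
    by_contra hni
    have := h2inact i hni
    have h := h1act i hi
    rw [hUeq] at h
    linarith
  · intro hi
    by_contra hni
    have := h1inact i hni
    have h := h2act i hi
    rw [← hUeq] at h
    linarith
end
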